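/- For every integer d ≥ 2, the family 𝒮 = {A ⊆ [d+1] : |A| ≤ d-1} ∪ {A ⊆ [d+2, 2d+2] : |A| ≤ d-1} ∪ {{1, d+2}, [2, d+1], [d+3, 2d+2]} is a simplicial complex with |V(𝒮)| = 2(d+1), |𝒮| = 2(2^{d+1} - d - 1), and minimum degree 2^d - d. -/

import Mathlib

lemma card_powerset_filter_le (T : Finset ℕ) (m : ℕ) :
    (T.powerset.filter (fun F => F.card ≤ m)).card
      = ∑ k ∈ Finset.range (m + 1), T.card.choose k := by
  have h : T.powerset.filter (fun F => F.card ≤ m)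
      = (Finset.range (m + 1)).biUnion (fun k => T.powersetCard k) := by
    ext F
    simp only [Finset.mem_filter, Finset.mem_powerset, Finset.mem_biUnion,
      Finset.mem_range, Finset.mem_powersetCard, Nat.lt_succ_iff]
    constructor
    · rintro ⟨h1, h2⟩; exact ⟨F.card, h2, h1, rfl⟩
    · rintro ⟨k, hk, h1, h2⟩; exact ⟨h1, h2 ▸ hk⟩
  rw [h, Finset.card_biUnion]
  · simp [Finset.card_powersetCard]
  · intro i _ j _ hij
    apply Finset.disjoint_left.mpr
    intro F hF hF'
    rw [Finset.mem_powersetCard] at hF hF'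
    exact hij (hF.2 ▸ hF'.2)

lemma sum_choose_aux (n : ℕ) (hn : 1 ≤ n) :
    ∑ k ∈ Finset.range (n - 1), n.choose k = 2 ^ n - n - 1 := by
  rcases n with _ | m
  · omega
  · have h := Nat.sum_range_choose (m + 1)
    rw [Finset.sum_range_succ, Finset.sum_range_succ] at h
    simp only [Nat.choose_succ_self_right, Nat.choose_self] at h
    simp only [Nat.add_sub_cancel]
    omega

lemma card_pow (T : Finset ℕ) (n : ℕ) (hT : T.card = n) (hn : 2 ≤ n) :
    (T.powerset.filter (fun F => F.card ≤ n - 2)).card = 2 ^ n - n - 1 := by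
  rw [card_powerset_filter_le, hT]
  have h : n - 2 + 1 = n - 1 := by omega
  rw [h, sum_choose_aux n (by omega)]

lemma count_mem (T : Finset ℕ) (a : ℕ) (ha : a ∈ T) (m : ℕ) (hm : 1 ≤ m) :
    ((T.powerset.filter (fun F => F.card ≤ m)).filter (fun F => a ∈ F)).card
      = ((T.erase a).powerset.filter (fun F => F.card ≤ m - 1)).card := by
  apply Finset.card_bij (fun F _ => F.erase a)
  · intro F hF
    simp only [Finset.mem_filter, Finset.mem_powerset] at hF ⊢
    obtain ⟨⟨hsub, hcard⟩, haF⟩ := hF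
    refine ⟨Finset.erase_subset_erase a hsub, ?_⟩
    rw [Finset.card_erase_of_mem haF]; omega
  · intro F hF F' hF' h
    simp only [Finset.mem_filter] at hF hF'
    rw [← Finset.insert_erase hF.2, ← Finset.insert_erase hF'.2, h]
  · intro G hG
    simp only [Finset.mem_filter, Finset.mem_powerset] at hG
    obtain ⟨hG1, hG2⟩ := hG
    have haG : a ∉ G := fun h => (Finset.mem_erase.mp (hG1 h)).1 rfl
    refine ⟨insert a G, ?_, Finset.erase_insert haG⟩
    simp only [Finset.mem_filter, Finset.mem_powerset]
    refine ⟨⟨Finset.insert_subset ha (hG1.trans (Finset.erase_subset a T)), ?_⟩,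
      Finset.mem_insert_self a G⟩
    rw [Finset.card_insert_of_notMem haG]
    omega

lemma degP (d : ℕ) (hd : 2 ≤ d) (T : Finset ℕ) (x : ℕ) (hT : T.card = d + 1) (hx : x ∈ T) :
    ((T.powerset.filter (fun F => F.card ≤ d - 1)).filter (fun F => x ∈ F)).card
      = 2 ^ d - d - 1 := by
  rw [count_mem T x hx (d - 1) (by omega)]
  have hc : (T.erase x).card = d := by
    rw [Finset.card_erase_of_mem hx, hT]
    omega
  have h := card_pow (T.erase x) d hc hd
  have he : d - 1 - 1 = d - 2 := by omega
  rw [he]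
  exact h

lemma deg_combine (d : ℕ) (hd : 2 ≤ d) (T e : Finset ℕ) (x : ℕ)
    (hT : T.card = d + 1) (hx : x ∈ T)
    (he : ¬(e ⊆ T ∧ e.card ≤ d - 1)) :
    ((T.powerset.filter (fun F => F.card ≤ d - 1)).filter (fun F => x ∈ F) ∪ {e}).card
      = 2 ^ d - d := by
  have hnot : e ∉ (T.powerset.filter (fun F => F.card ≤ d - 1)).filter (fun F => x ∈ F) := by
    simp only [Finset.mem_filter, Finset.mem_powerset]
    tauto
  rw [Finset.card_union_of_disjoint (Finset.disjoint_singleton_right.mpr hnot),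
    Finset.card_singleton, degP d hd T x hT hx]
  have : d < 2 ^ d := Nat.lt_two_pow_self
  omega

theorem beyond_construction (d : ℕ) (hd : 2 ≤ d) :
    ∀ S : Finset (Finset ℕ),
      S = ((Finset.Icc 1 (d + 1)).powerset.filter (fun F => F.card ≤ d - 1)) ∪
          ((Finset.Icc (d + 2) (2 * d + 2)).powerset.filter (fun F => F.card ≤ d - 1)) ∪
          {({1, d + 2} : Finset ℕ), Finset.Icc 2 (d + 1), Finset.Icc (d + 3) (2 * d + 2)} →
      (∀ X ∈ S, ∀ Y ⊆ X, Y ∈ S) ∧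
      (S.sup id).card = 2 * (d + 1) ∧
      S.card = 2 * (2 ^ (d + 1) - d - 1) ∧
      (∀ x ∈ S.sup id, 2 ^ d - d ≤ (S.filter (fun e => x ∈ e)).card) ∧
      (∃ x ∈ S.sup id, (S.filter (fun e => x ∈ e)).card = 2 ^ d - d) := by
  intro S hS
  subst hS
  have hA : (Finset.Icc 1 (d + 1)).card = d + 1 := by rw [Nat.card_Icc]; omega
  have hB : (Finset.Icc (d + 2) (2 * d + 2)).card = d + 1 := by rw [Nat.card_Icc]; omega
  have hE2 : (Finset.Icc 2 (d + 1)).card = d := by rw [Nat.card_Icc]; omega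
  have hE3 : (Finset.Icc (d + 3) (2 * d + 2)).card = d := by rw [Nat.card_Icc]; omega
  have hpow : d < 2 ^ d := Nat.lt_two_pow_self
  have hpow1 : 2 ^ (d + 1) = 2 * 2 ^ d := by ring
  -- the sup
  have hsup : (((Finset.Icc 1 (d + 1)).powerset.filter (fun F => F.card ≤ d - 1)) ∪
          ((Finset.Icc (d + 2) (2 * d + 2)).powerset.filter (fun F => F.card ≤ d - 1)) ∪
          {({1, d + 2} : Finset ℕ), Finset.Icc 2 (d + 1), Finset.Icc (d + 3) (2 * d + 2)}).sup id
        = Finset.Icc 1 (2 * d + 2) := by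
    ext a
    rw [Finset.mem_sup, Finset.mem_Icc]
    constructor
    · rintro ⟨F, hF, haF⟩
      simp only [Finset.mem_union, Finset.mem_filter, Finset.mem_powerset, Finset.mem_insert,
        Finset.mem_singleton, id] at hF haF
      rcases hF with ((⟨h, _⟩ | ⟨h, _⟩) | h | h | h)
      · have := Finset.mem_Icc.mp (h haF); omega
      · have := Finset.mem_Icc.mp (h haF); omega
      · subst h
        rcases Finset.mem_insert.mp haF with h | h
        · omega
        · rw [Finset.mem_singleton] at h; omega
      · subst h; have := Finset.mem_Icc.mp haF; omega
      · subst h; have := Finset.mem_Icc.mp haF; omega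
    · intro ha
      by_cases h : a ≤ d + 1
      · refine ⟨{a}, ?_, Finset.mem_singleton_self a⟩
        simp only [Finset.mem_union, Finset.mem_filter, Finset.mem_powerset]
        exact Or.inl (Or.inl ⟨Finset.singleton_subset_iff.mpr (Finset.mem_Icc.mpr (by omega)),
          by rw [Finset.card_singleton]; omega⟩)
      · refine ⟨{a}, ?_, Finset.mem_singleton_self a⟩
        simp only [Finset.mem_union, Finset.mem_filter, Finset.mem_powerset]
        exact Or.inl (Or.inr ⟨Finset.singleton_subset_iff.mpr (Finset.mem_Icc.mpr (by omega)),
          by rw [Finset.card_singleton]; omega⟩)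
  refine ⟨?_, ?_, ?_, ?_, ?_⟩
  -- downward closed
  · intro X hX Y hY
    simp only [Finset.mem_union, Finset.mem_filter, Finset.mem_powerset, Finset.mem_insert,
      Finset.mem_singleton] at hX ⊢
    rcases hX with ((⟨hXA, hXc⟩ | ⟨hXB, hXc⟩) | hX | hX | hX)
    · exact Or.inl (Or.inl ⟨hY.trans hXA, (Finset.card_le_card hY).trans hXc⟩)
    · exact Or.inl (Or.inr ⟨hY.trans hXB, (Finset.card_le_card hY).trans hXc⟩)
    · subst hX
      by_cases h1 : 1 ∈ Y
      · by_cases h2 : d + 2 ∈ Y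
        · refine Or.inr (Or.inl ?_)
          apply Finset.Subset.antisymm hY
          intro y hy
          rcases Finset.mem_insert.mp hy with h | h
          · subst h; exact h1
          · rw [Finset.mem_singleton] at h; subst h; exact h2
        · refine Or.inl (Or.inl ⟨?_, ?_⟩)
          · intro y hy
            have := hY hy
            rcases Finset.mem_insert.mp this with h | h
            · subst h; exact Finset.mem_Icc.mpr (by omega)
            · rw [Finset.mem_singleton] at h; subst h; exact absurd hy h2
          · have hsub : Y ⊆ {1} := by
              intro y hy
              have := hY hy
              rcases Finset.mem_insert.mp this with h | h
              · subst h; exact Finset.mem_singleton_self 1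
              · rw [Finset.mem_singleton] at h; subst h; exact absurd hy h2
            have := Finset.card_le_card hsub
            rw [Finset.card_singleton] at this; omega
      · refine Or.inl (Or.inr ⟨?_, ?_⟩)
        · intro y hy
          have := hY hy
          rcases Finset.mem_insert.mp this with h | h
          · subst h; exact absurd hy h1
          · rw [Finset.mem_singleton] at h; subst h; exact Finset.mem_Icc.mpr (by omega)
        · have hsub : Y ⊆ {d + 2} := by
            intro y hy
            have := hY hy
            rcases Finset.mem_insert.mp this with h | h
            · subst h; exact absurd hy h1
            · rw [Finset.mem_singleton] at h; subst h; exact Finset.mem_singleton_self _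
          have := Finset.card_le_card hsub
          rw [Finset.card_singleton] at this; omega
    · subst hX
      by_cases h : Y = Finset.Icc 2 (d + 1)
      · exact Or.inr (Or.inr (Or.inl h))
      · refine Or.inl (Or.inl ⟨hY.trans (Finset.Icc_subset_Icc (by omega) le_rfl), ?_⟩)
        have := Finset.card_lt_card (Finset.ssubset_iff_subset_ne.mpr ⟨hY, h⟩)
        rw [hE2] at this; omega
    · subst hX
      by_cases h : Y = Finset.Icc (d + 3) (2 * d + 2)
      · exact Or.inr (Or.inr (Or.inr h))
      · refine Or.inl (Or.inr ⟨hY.trans (Finset.Icc_subset_Icc (by omega) le_rfl), ?_⟩)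
        have := Finset.card_lt_card (Finset.ssubset_iff_subset_ne.mpr ⟨hY, h⟩)
        rw [hE3] at this; omega
  -- card of sup
  · rw [hsup, Nat.card_Icc]; omega
  -- cardinality of S
  · have hP1 : ((Finset.Icc 1 (d + 1)).powerset.filter (fun F => F.card ≤ d - 1)).card
        = 2 ^ (d + 1) - (d + 1) - 1 := card_pow _ (d + 1) hA (by omega)
    have hP2 : ((Finset.Icc (d + 2) (2 * d + 2)).powerset.filter (fun F => F.card ≤ d - 1)).card
        = 2 ^ (d + 1) - (d + 1) - 1 := card_pow _ (d + 1) hB (by omega)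
    have hinter : ((Finset.Icc 1 (d + 1)).powerset.filter (fun F => F.card ≤ d - 1)) ∩
        ((Finset.Icc (d + 2) (2 * d + 2)).powerset.filter (fun F => F.card ≤ d - 1)) = {∅} := by
      ext F
      simp only [Finset.mem_inter, Finset.mem_filter, Finset.mem_powerset, Finset.mem_singleton]
      constructor
      · rintro ⟨⟨h1, _⟩, ⟨h2, _⟩⟩
        rw [Finset.eq_empty_iff_forall_notMem]
        intro y hy
        have ha := Finset.mem_Icc.mp (h1 hy)
        have hb := Finset.mem_Icc.mp (h2 hy)
        omega
      · rintro rfl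
        simp
    have hU := Finset.card_union_add_card_inter
      ((Finset.Icc 1 (d + 1)).powerset.filter (fun F => F.card ≤ d - 1))
      ((Finset.Icc (d + 2) (2 * d + 2)).powerset.filter (fun F => F.card ≤ d - 1))
    rw [hinter, Finset.card_singleton, hP1, hP2] at hU
    have hEdisj : Disjoint
        (((Finset.Icc 1 (d + 1)).powerset.filter (fun F => F.card ≤ d - 1)) ∪
          ((Finset.Icc (d + 2) (2 * d + 2)).powerset.filter (fun F => F.card ≤ d - 1)))
        ({({1, d + 2} : Finset ℕ), Finset.Icc 2 (d + 1), Finset.Icc (d + 3) (2 * d + 2)} :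
          Finset (Finset ℕ)) := by
      rw [Finset.disjoint_right]
      intro e he hmem
      simp only [Finset.mem_insert, Finset.mem_singleton] at he
      simp only [Finset.mem_union, Finset.mem_filter, Finset.mem_powerset] at hmem
      rcases he with rfl | rfl | rfl
      · rcases hmem with ⟨h, _⟩ | ⟨h, _⟩
        · have := Finset.mem_Icc.mp (h (by simp : d + 2 ∈ ({1, d + 2} : Finset ℕ))); omega
        · have := Finset.mem_Icc.mp (h (by simp : 1 ∈ ({1, d + 2} : Finset ℕ))); omega
      · rcases hmem with ⟨_, hc⟩ | ⟨_, hc⟩ <;> rw [hE2] at hc <;> omega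
      · rcases hmem with ⟨_, hc⟩ | ⟨_, hc⟩ <;> rw [hE3] at hc <;> omega
    have hEcard : ({({1, d + 2} : Finset ℕ), Finset.Icc 2 (d + 1),
        Finset.Icc (d + 3) (2 * d + 2)} : Finset (Finset ℕ)).card = 3 := by
      rw [Finset.card_insert_of_notMem, Finset.card_insert_of_notMem, Finset.card_singleton]
      · rw [Finset.mem_singleton]
        intro h
        have h2 : (2 : ℕ) ∈ Finset.Icc 2 (d + 1) := Finset.mem_Icc.mpr (by omega)
        rw [h, Finset.mem_Icc] at h2; omega
      · simp only [Finset.mem_insert, Finset.mem_singleton]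
        push_neg
        constructor
        · intro h
          have h1 : (1 : ℕ) ∈ Finset.Icc 2 (d + 1) := h ▸ (by simp)
          rw [Finset.mem_Icc] at h1; omega
        · intro h
          have h1 : (1 : ℕ) ∈ Finset.Icc (d + 3) (2 * d + 2) := h ▸ (by simp)
          rw [Finset.mem_Icc] at h1; omega
    rw [Finset.card_union_of_disjoint hEdisj, hEcard]
    omega
  -- degrees ≥
  · rw [hsup]
    intro x hx
    rw [Finset.mem_Icc] at hx
    rw [Finset.filter_union, Finset.filter_union]
    by_cases hside : x ≤ d + 1
    · have h0 : ((Finset.Icc (d + 2) (2 * d + 2)).powerset.filter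
          (fun F => F.card ≤ d - 1)).filter (fun e => x ∈ e) = ∅ := by
        rw [Finset.filter_eq_empty_iff]
        intro F hF hxF
        rw [Finset.mem_filter, Finset.mem_powerset] at hF
        have := Finset.mem_Icc.mp (hF.1 hxF); omega
      rw [h0, Finset.union_empty]
      by_cases h1 : x = 1
      · subst h1
        have hEf : (({({1, d + 2} : Finset ℕ), Finset.Icc 2 (d + 1),
            Finset.Icc (d + 3) (2 * d + 2)} : Finset (Finset ℕ)).filter (fun e => 1 ∈ e))
            = {({1, d + 2} : Finset ℕ)} := by
          ext F
          simp only [Finset.mem_filter, Finset.mem_insert, Finset.mem_singleton]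
          constructor
          · rintro ⟨(rfl | rfl | rfl), hm⟩
            · rfl
            · rw [Finset.mem_Icc] at hm; omega
            · rw [Finset.mem_Icc] at hm; omega
          · rintro rfl; exact ⟨Or.inl rfl, by simp⟩
        rw [hEf]
        refine le_of_eq (deg_combine d hd _ _ 1 hA (Finset.mem_Icc.mpr (by omega)) ?_).symm
        rintro ⟨hsub, -⟩
        have := Finset.mem_Icc.mp (hsub (by simp : d + 2 ∈ ({1, d + 2} : Finset ℕ))); omega
      · have hEf : (({({1, d + 2} : Finset ℕ), Finset.Icc 2 (d + 1),
            Finset.Icc (d + 3) (2 * d + 2)} : Finset (Finset ℕ)).filter (fun e => x ∈ e))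
            = {Finset.Icc 2 (d + 1)} := by
          ext F
          simp only [Finset.mem_filter, Finset.mem_insert, Finset.mem_singleton]
          constructor
          · rintro ⟨(rfl | rfl | rfl), hm⟩
            · rcases Finset.mem_insert.mp hm with h | h
              · omega
              · rw [Finset.mem_singleton] at h; omega
            · rfl
            · rw [Finset.mem_Icc] at hm; omega
          · rintro rfl; exact ⟨Or.inr (Or.inl rfl), Finset.mem_Icc.mpr (by omega)⟩
        rw [hEf]
        refine le_of_eq (deg_combine d hd _ _ x hA (Finset.mem_Icc.mpr (by omega)) ?_).symm
        rintro ⟨-, hc⟩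
        rw [hE2] at hc; omega
    · have h0 : ((Finset.Icc 1 (d + 1)).powerset.filter
          (fun F => F.card ≤ d - 1)).filter (fun e => x ∈ e) = ∅ := by
        rw [Finset.filter_eq_empty_iff]
        intro F hF hxF
        rw [Finset.mem_filter, Finset.mem_powerset] at hF
        have := Finset.mem_Icc.mp (hF.1 hxF); omega
      rw [h0, Finset.empty_union]
      by_cases h1 : x = d + 2
      · subst h1
        have hEf : (({({1, d + 2} : Finset ℕ), Finset.Icc 2 (d + 1),
            Finset.Icc (d + 3) (2 * d + 2)} : Finset (Finset ℕ)).filter (fun e => d + 2 ∈ e))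
            = {({1, d + 2} : Finset ℕ)} := by
          ext F
          simp only [Finset.mem_filter, Finset.mem_insert, Finset.mem_singleton]
          constructor
          · rintro ⟨(rfl | rfl | rfl), hm⟩
            · rfl
            · rw [Finset.mem_Icc] at hm; omega
            · rw [Finset.mem_Icc] at hm; omega
          · rintro rfl; exact ⟨Or.inl rfl, by simp⟩
        rw [hEf]
        refine le_of_eq (deg_combine d hd _ _ (d + 2) hB (Finset.mem_Icc.mpr (by omega)) ?_).symm
        rintro ⟨hsub, -⟩
        have := Finset.mem_Icc.mp (hsub (by simp : 1 ∈ ({1, d + 2} : Finset ℕ))); omega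
      · have hEf : (({({1, d + 2} : Finset ℕ), Finset.Icc 2 (d + 1),
            Finset.Icc (d + 3) (2 * d + 2)} : Finset (Finset ℕ)).filter (fun e => x ∈ e))
            = {Finset.Icc (d + 3) (2 * d + 2)} := by
          ext F
          simp only [Finset.mem_filter, Finset.mem_insert, Finset.mem_singleton]
          constructor
          · rintro ⟨(rfl | rfl | rfl), hm⟩
            · rcases Finset.mem_insert.mp hm with h | h
              · omega
              · rw [Finset.mem_singleton] at h; omega
            · rw [Finset.mem_Icc] at hm; omega
            · rfl
          · rintro rfl; exact ⟨Or.inr (Or.inr rfl), Finset.mem_Icc.mpr (by omega)⟩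
        rw [hEf]
        refine le_of_eq (deg_combine d hd _ _ x hB (Finset.mem_Icc.mpr (by omega)) ?_).symm
        rintro ⟨-, hc⟩
        rw [hE3] at hc; omega
  -- exists min degree
  · refine ⟨1, ?_, ?_⟩
    · rw [hsup, Finset.mem_Icc]; omega
    · rw [Finset.filter_union, Finset.filter_union]
      have h0 : ((Finset.Icc (d + 2) (2 * d + 2)).powerset.filter
          (fun F => F.card ≤ d - 1)).filter (fun e => (1 : ℕ) ∈ e) = ∅ := by
        rw [Finset.filter_eq_empty_iff]
        intro F hF hxF
        rw [Finset.mem_filter, Finset.mem_powerset] at hF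
        have := Finset.mem_Icc.mp (hF.1 hxF); omega
      rw [h0, Finset.union_empty]
      have hEf : (({({1, d + 2} : Finset ℕ), Finset.Icc 2 (d + 1),
          Finset.Icc (d + 3) (2 * d + 2)} : Finset (Finset ℕ)).filter (fun e => (1 : ℕ) ∈ e))
          = {({1, d + 2} : Finset ℕ)} := by
        ext F
        simp only [Finset.mem_filter, Finset.mem_insert, Finset.mem_singleton]
        constructor
        · rintro ⟨(rfl | rfl | rfl), hm⟩
          · rfl
          · rw [Finset.mem_Icc] at hm; omega
          · rw [Finset.mem_Icc] at hm; omega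
        · rintro rfl; exact ⟨Or.inl rfl, by simp⟩
      rw [hEf]
      refine deg_combine d hd _ _ 1 hA (Finset.mem_Icc.mpr (by omega)) ?_
      rintro ⟨hsub, -⟩
      have := Finset.mem_Icc.mp (hsub (by simp : d + 2 ∈ ({1, d + 2} : Finset ℕ))); omega
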